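/- With the Riemannian Dirac current U_φ ∈ T_pM defined by g(U_φ, X) = ⟨e₀·X·φ, φ⟩ and the Lorentzian Dirac current V_φ := −U_φ + u_φ e₀ with u_φ = ‖φ‖², one has ‖V_φ · φ‖² = −ḡ(V_φ, V_φ)·‖φ‖². Consequently, for φ ≠ 0 the vector V_φ is nonzero, causal (i.e. ḡ(V_φ, V_φ) ≤ 0), and if V_φ is lightlike then V_φ · φ = 0. -/

import Mathlib

/-- With the Riemannian Dirac current `U_φ` defined by
`g(U_φ, X) = ⟨e₀·X·φ, φ⟩` and the Lorentzian Dirac current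
`V_φ = −U_φ + u_φ e₀` with `u_φ = ‖φ‖²`, one has
`‖V_φ·φ‖² = −ḡ(V_φ, V_φ)·‖φ‖² = (u_φ² − ‖U_φ‖²)·‖φ‖²`. Consequently, for
`φ ≠ 0` the vector `V_φ` is nonzero and causal (`ḡ(V_φ,V_φ) ≤ 0`, i.e.
`‖U_φ‖² ≤ u_φ²`), and if `V_φ` is lightlike then `V_φ·φ = 0`.
Clifford multiplication by spacelike vectors is `c`, by `e₀` is `A`. -/
theorem stmt14 (n : ℕ) (S : Type*) [NormedAddCommGroup S] [InnerProductSpace ℂ S]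
    (c : EuclideanSpace ℝ (Fin n) → Module.End ℂ S) (A : Module.End ℂ S)
    (hA2 : ∀ v, A (A v) = v)
    (hAsa : ∀ v w, (inner ℂ (A v) w : ℂ) = inner ℂ v (A w))
    (hskew : ∀ X v w, (inner ℂ (c X v) w : ℂ) = -inner ℂ v (c X w))
    (hanti : ∀ X v, A (c X v) = -c X (A v))
    (hcliff : ∀ X v, c X (c X v) = -((‖X‖ : ℂ) ^ 2) • v)
    (φ : S) (U : EuclideanSpace ℝ (Fin n)) (u : ℝ)
    (hu : u = ‖φ‖ ^ 2)
    (hU : ∀ X, (inner ℝ U X : ℝ) = (inner ℂ (A (c X φ)) φ : ℂ).re) :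
    ‖-(c U φ) + (u : ℂ) • A φ‖ ^ 2 = (u ^ 2 - ‖U‖ ^ 2) * ‖φ‖ ^ 2 ∧
    (φ ≠ 0 →
      ¬(U = 0 ∧ u = 0) ∧ ‖U‖ ^ 2 - u ^ 2 ≤ 0 ∧
        (‖U‖ ^ 2 = u ^ 2 → -(c U φ) + (u : ℂ) • A φ = 0)) := by
  -- ‖Aφ‖² = ‖φ‖²
  have hy : ‖A φ‖ ^ 2 = ‖φ‖ ^ 2 := by
    have h : (inner ℂ (A φ) (A φ) : ℂ) = inner ℂ φ φ := by rw [hAsa, hA2]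
    rw [inner_self_eq_norm_sq_to_K, inner_self_eq_norm_sq_to_K] at h
    exact_mod_cast h
  -- ‖c U φ‖² = ‖U‖² * ‖φ‖²
  have hx : ‖c U φ‖ ^ 2 = ‖U‖ ^ 2 * ‖φ‖ ^ 2 := by
    have h : (inner ℂ (c U φ) (c U φ) : ℂ) = ((‖U‖ : ℂ) ^ 2) * inner ℂ φ φ := by
      simp only [hskew, hcliff, inner_smul_right]
      ring
    rw [inner_self_eq_norm_sq_to_K, inner_self_eq_norm_sq_to_K] at h
    have : ((‖c U φ‖ ^ 2 : ℝ) : ℂ) = ((‖U‖ ^ 2 * ‖φ‖ ^ 2 : ℝ) : ℂ) := by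
      push_cast
      simpa using h
    exact_mod_cast this
  -- cross term
  have hre : (inner ℂ (A φ) (c U φ) : ℂ).re = ‖U‖ ^ 2 := by
    have h1 : (inner ℂ (A (c U φ)) φ : ℂ) = inner ℂ (c U φ) (A φ) := hAsa _ _
    have h2 : (inner ℝ U U : ℝ) = ‖U‖ ^ 2 := real_inner_self_eq_norm_sq U
    have h3 : (inner ℂ (A φ) (c U φ) : ℂ).re = (inner ℂ (c U φ) (A φ) : ℂ).re :=
      inner_re_symm (𝕜 := ℂ) _ _
    rw [h3, ← h1, ← hU U, h2]
  constructor
  · have key : ‖-(c U φ) + (u : ℂ) • A φ‖ ^ 2 =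
        ‖(u : ℂ) • A φ‖ ^ 2 - 2 * (inner ℂ ((u : ℂ) • A φ) (c U φ) : ℂ).re + ‖c U φ‖ ^ 2 := by
      rw [show -(c U φ) + (u : ℂ) • A φ = (u : ℂ) • A φ - c U φ by abel]
      exact norm_sub_sq (𝕜 := ℂ) _ _
    have hsm : ‖(u : ℂ) • A φ‖ ^ 2 = u ^ 2 * ‖φ‖ ^ 2 := by
      rw [norm_smul, mul_pow, hy]
      simp [Complex.sq_norm, Complex.normSq_ofReal, sq]
    have hcr : (inner ℂ ((u : ℂ) • A φ) (c U φ) : ℂ).re = u * ‖U‖ ^ 2 := by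
      rw [inner_smul_left]
      simp [hre]
    rw [key, hsm, hcr, hx, hu]
    ring
  · intro hφ
    have hφ2 : 0 < ‖φ‖ ^ 2 := pow_pos (norm_pos_iff.mpr hφ) 2
    have hmain : ‖-(c U φ) + (u : ℂ) • A φ‖ ^ 2 = (u ^ 2 - ‖U‖ ^ 2) * ‖φ‖ ^ 2 := by
      have key : ‖-(c U φ) + (u : ℂ) • A φ‖ ^ 2 =
          ‖(u : ℂ) • A φ‖ ^ 2 - 2 * (inner ℂ ((u : ℂ) • A φ) (c U φ) : ℂ).re + ‖c U φ‖ ^ 2 := by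
        rw [show -(c U φ) + (u : ℂ) • A φ = (u : ℂ) • A φ - c U φ by abel]
        exact norm_sub_sq (𝕜 := ℂ) _ _
      have hsm : ‖(u : ℂ) • A φ‖ ^ 2 = u ^ 2 * ‖φ‖ ^ 2 := by
        rw [norm_smul, mul_pow, hy]
        simp [Complex.sq_norm, Complex.normSq_ofReal, sq]
      have hcr : (inner ℂ ((u : ℂ) • A φ) (c U φ) : ℂ).re = u * ‖U‖ ^ 2 := by
        rw [inner_smul_left]
        simp [hre]
      rw [key, hsm, hcr, hx, hu]
      ring
    refine ⟨?_, ?_, ?_⟩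
    · rintro ⟨-, hu0⟩
      rw [hu0] at hu
      exact hφ2.ne (by linarith)
    · nlinarith [sq_nonneg ‖-(c U φ) + (u : ℂ) • A φ‖, hmain]
    · intro hl
      have : ‖-(c U φ) + (u : ℂ) • A φ‖ ^ 2 = 0 := by rw [hmain, hl]; ring
      have := pow_eq_zero_iff (n := 2) (by norm_num) |>.mp this
      exact norm_eq_zero.mp this
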